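/- The series 3/4 + (3/2)·∑_{n≥1} 1/((2(2n)² - 1)² - (2n)²) converges to π/4. -/

import Mathlib

open Filter Finset Real

lemma key (N : ℕ) :
    3 / 4 + (3 / 2) * ∑ n ∈ Finset.Icc 1 N,
        1 / ((2 * (2 * (n : ℝ)) ^ 2 - 1) ^ 2 - (2 * (n : ℝ)) ^ 2)
      = (∑ i ∈ range (2 * N + 1), (-1 : ℝ) ^ i / (2 * i + 1))
        - 1 / (4 * (2 * N + 1)) := by
  induction N with
  | zero => norm_num
  | succ n ih =>
      rw [show 2 * (n + 1) + 1 = (2 * n + 1) + 1 + 1 by ring,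
        Finset.sum_range_succ, Finset.sum_range_succ,
        Finset.sum_Icc_succ_top (by omega), mul_add, ← add_assoc, ih]
      have h1 : ((2 * n + 1 : ℕ) : ℝ) = 2 * n + 1 := by push_cast; ring
      have h2 : (((2 * n + 1) + 1 : ℕ) : ℝ) = 2 * n + 2 := by push_cast; ring
      rw [h1, h2]
      have hm : (0:ℝ) < (n:ℝ) + 1 := by positivity
      have d1 : (2 * (2 * ((n:ℝ) + 1)) ^ 2 - 1) ^ 2 - (2 * ((n:ℝ) + 1)) ^ 2 ≠ 0 := by
        nlinarith [sq_nonneg ((n:ℝ)), hm, sq_nonneg ((n:ℝ)+1)]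
      have d2 : (2 * ((n:ℝ)) + 1) ≠ 0 := by positivity
      have d3 : (2 * (n:ℝ) + 2) * 2 + 1 ≠ 0 := by positivity
      have d4 : (2 * (n:ℝ) + 1) * 2 + 1 ≠ 0 := by positivity
      have d5 : (4 * (2 * ((n:ℝ) + 1) + 1)) ≠ 0 := by positivity
      have d6 : (4 * (2 * (n:ℝ) + 1)) ≠ 0 := by positivity
      have hp : ((-1:ℝ)) ^ (2 * n + 1) = -1 := by simp [pow_succ, pow_mul]
      have hp2 : ((-1:ℝ)) ^ (2 * n + 2) = 1 := by simp [pow_succ, pow_mul]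
      rw [hp, hp2]
      push_cast
      have hD : (2 * (2 * ((n:ℝ) + 1)) ^ 2 - 1) ^ 2 - (2 * ((n:ℝ) + 1)) ^ 2 = (4*(n:ℝ)+5)*(2*n+1)*(4*n+3)*(2*n+3) := by ring
      rw [hD]
      field_simp
      ring

theorem putumana_somayaji_series :
    Tendsto (fun N : ℕ => 3 / 4 + (3 / 2) * ∑ n ∈ Finset.Icc 1 N,
        1 / ((2 * (2 * (n : ℝ)) ^ 2 - 1) ^ 2 - (2 * (n : ℝ)) ^ 2))
      atTop (nhds (π / 4)) := by
  have h1 : Tendsto (fun N : ℕ => ∑ i ∈ range (2 * N + 1), (-1 : ℝ) ^ i / (2 * i + 1))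
      atTop (nhds (π / 4)) :=
    Real.tendsto_sum_pi_div_four.comp
      (tendsto_atTop_atTop.mpr fun b => ⟨b, fun a ha => by omega⟩)
  have h2 : Tendsto (fun N : ℕ => 1 / (4 * (2 * (N:ℝ) + 1))) atTop (nhds 0) := by
    have ht : Tendsto (fun N : ℕ => (4 * (2 * (N:ℝ) + 1))) atTop atTop := by
      apply tendsto_atTop_atTop.mpr
      intro b
      refine ⟨⌈b⌉₊, fun a ha => ?_⟩
      have h1 : b ≤ (⌈b⌉₊ : ℝ) := Nat.le_ceil b
      have h2 : ((⌈b⌉₊ : ℕ) : ℝ) ≤ (a : ℝ) := by exact_mod_cast ha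
      nlinarith
    exact (tendsto_inv_atTop_zero.comp ht).congr fun N => by
      simp [Function.comp, one_div]
  have := h1.sub h2
  rw [sub_zero] at this
  refine this.congr fun N => ?_
  rw [key N]
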